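/- Suppose Assumptions 1–3 hold with constants ε ≥ 0, δ ∈ (0,1], γ > 0, Condition 1 holds, and Condition 2 holds with constant C > 0. If ε < δC/4, λ > (H[Y] + 2ε)/(δC − 4ε), and ε < γ/(2(1 + 2λ)), then L̂(V) < L̂(Φ) for every feature mask Φ ⊆ {1,…,d} with Φ ≠ V; that is, the solution of the ZIN objective identifies exactly the invariant features. -/

import Mathlib

open MeasureTheory ProbabilityTheory
open scoped ENNReal

/-- `- log p` for `p ∈ [0, ∞]`, valued in `[0, ∞]`, with `- log 0 = ∞`. -/
noncomputable def negLog (p : ℝ≥0∞) : ℝ≥0∞ :=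
  if p = 0 then ⊤ else ENNReal.ofReal (-Real.log p.toReal)

/-- Conditional Shannon entropy `H[Y | W]` (natural logarithm) of a finite-valued random
variable `Y` given a finite-valued random variable `W`, under the measure `μ`. -/
noncomputable def condEnt {Ω 𝒴 𝒲 : Type*} [MeasurableSpace Ω] (μ : Measure Ω)
    [Fintype 𝒴] [Fintype 𝒲] (Y : Ω → 𝒴) (W : Ω → 𝒲) : ℝ :=
  ∑ w : 𝒲, ∑ y : 𝒴,
    -((μ {ω | Y ω = y ∧ W ω = w}).toReal *
      Real.log ((μ {ω | Y ω = y ∧ W ω = w}).toReal / (μ {ω | W ω = w}).toReal))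

/-- Shannon entropy `H[Y]` (natural logarithm) of a finite-valued random variable `Y`. -/
noncomputable def shEnt {Ω 𝒴 : Type*} [MeasurableSpace Ω] (μ : Measure Ω)
    [Fintype 𝒴] (Y : Ω → 𝒴) : ℝ :=
  ∑ y : 𝒴, -((μ {ω | Y ω = y}).toReal * Real.log (μ {ω | Y ω = y}).toReal)

/-- Expected cross-entropy risk `E[- log f(X)(Y)]` of a probabilistic classifier `f`,
valued in `[0, ∞]`. -/
noncomputable def ceRisk {Ω α 𝒴 : Type*} [MeasurableSpace Ω] (μ : Measure Ω)
    [Fintype α] [Fintype 𝒴] (X : Ω → α) (Y : Ω → 𝒴) (f : α → PMF 𝒴) : ℝ≥0∞ :=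
  ∑ x : α, ∑ y : 𝒴, μ {ω | X ω = x ∧ Y ω = y} * negLog (f x y)

/-- Environment-wise weighted cross-entropy risk `E[1{ρ(Z) = k} · (- log f(X)(Y))]`. -/
noncomputable def ceRiskW {Ω α 𝒴 𝒵 : Type*} [MeasurableSpace Ω] (μ : Measure Ω)
    [Fintype α] [Fintype 𝒴] {K : ℕ}
    (X : Ω → α) (Y : Ω → 𝒴) (Z : Ω → 𝒵) (ρ : 𝒵 → Fin K) (k : Fin K)
    (f : α → PMF 𝒴) : ℝ≥0∞ :=
  ∑ x : α, ∑ y : 𝒴, μ {ω | ρ (Z ω) = k ∧ X ω = x ∧ Y ω = y} * negLog (f x y)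

/-- The masked feature tuple `X_Φ = (X^j)_{j ∈ Φ}` of a feature vector `X`. -/
def maskFun {Ω 𝒳 : Type*} {d : ℕ} (X : Ω → Fin d → 𝒳) (Φ : Finset (Fin d)) :
    Ω → ({ j : Fin d // j ∈ Φ } → 𝒳) :=
  fun ω j => X ω j.1

lemma real_gibbs {𝒴 : Type*} [Fintype 𝒴] (p q : 𝒴 → ℝ)
    (hp : ∀ y, 0 ≤ p y) (hq : ∀ y, 0 ≤ q y) (hq1 : ∑ y, q y ≤ 1)
    (hpq : ∀ y, 0 < p y → 0 < q y) :
    ∑ y, -(p y * Real.log (p y / ∑ y', p y')) ≤ ∑ y, p y * (-Real.log (q y)) := by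
  set P := ∑ y', p y' with hP
  have hP0 : 0 ≤ P := Finset.sum_nonneg fun y _ => hp y
  have key : ∀ y, -(p y * Real.log (p y / P)) ≤ p y * (-Real.log (q y)) + (P * q y - p y) := by
    intro y
    rcases eq_or_lt_of_le (hp y) with h0 | hpos
    · rw [← h0]
      have : 0 ≤ P * q y := mul_nonneg hP0 (hq y)
      simpa using this
    · have hqy := hpq y hpos
      have hPpos : 0 < P := lt_of_lt_of_le hpos (Finset.single_le_sum (fun y _ => hp y) (Finset.mem_univ y))
      have ht : 0 < q y * P / p y := by positivity
      have hlog := Real.log_le_sub_one_of_pos ht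
      have hlogeq : Real.log (q y * P / p y) = Real.log (q y) + Real.log P - Real.log (p y) := by
        rw [Real.log_div (by positivity) (ne_of_gt hpos), Real.log_mul (ne_of_gt hqy) (ne_of_gt hPpos)]
      have hlogdiv : Real.log (p y / P) = Real.log (p y) - Real.log P :=
        Real.log_div (ne_of_gt hpos) (ne_of_gt hPpos)
      have h2 := mul_le_mul_of_nonneg_left hlog (le_of_lt hpos)
      have hcancel : p y * (q y * P / p y - 1) = P * q y - p y := by
        field_simp
      rw [hcancel, hlogeq] at h2
      rw [hlogdiv]
      nlinarith [h2]
  calc ∑ y, -(p y * Real.log (p y / P))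
      ≤ ∑ y, (p y * (-Real.log (q y)) + (P * q y - p y)) := Finset.sum_le_sum fun y _ => key y
    _ = (∑ y, p y * (-Real.log (q y))) + (P * (∑ y, q y) - P) := by
        rw [Finset.sum_add_distrib, Finset.sum_sub_distrib, ← Finset.mul_sum]
    _ ≤ ∑ y, p y * (-Real.log (q y)) := by nlinarith [hP0, hq1]

lemma gibbs_arith {𝒴 : Type*} [Fintype 𝒴] (p : 𝒴 → ℝ≥0∞) (hp : ∀ y, p y ≠ ⊤) (q : PMF 𝒴) :
    ENNReal.ofReal (∑ y, -((p y).toReal * Real.log ((p y).toReal / (∑ y', p y').toReal)))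
      ≤ ∑ y, p y * negLog (q y) := by
  classical
  have hqle1 : ∀ y, (q y).toReal ≤ 1 := by
    intro y
    have := ENNReal.toReal_mono (by norm_num) (q.coe_le_one y)
    simpa using this
  by_cases hbad : ∃ y, p y ≠ 0 ∧ q y = 0
  · obtain ⟨y, hpy, hqy⟩ := hbad
    have htop : p y * negLog (q y) = ⊤ := by
      rw [hqy, negLog, if_pos rfl, ENNReal.mul_top hpy]
    have : (⊤:ℝ≥0∞) ≤ ∑ y, p y * negLog (q y) := by
      rw [← htop]
      exact Finset.single_le_sum (f := fun y => p y * negLog (q y)) (fun _ _ => zero_le)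
        (Finset.mem_univ y)
    exact le_trans le_top this
  · push_neg at hbad
    have hrw : ∀ y, p y * negLog (q y) = ENNReal.ofReal ((p y).toReal * (-Real.log (q y).toReal)) := by
      intro y
      by_cases hpy : p y = 0
      · simp [hpy]
      · have hqy := hbad y hpy
        rw [negLog, if_neg hqy]
        calc p y * ENNReal.ofReal (-Real.log (q y).toReal)
            = ENNReal.ofReal (p y).toReal * ENNReal.ofReal (-Real.log (q y).toReal) := by
              rw [ENNReal.ofReal_toReal (hp y)]
          _ = ENNReal.ofReal ((p y).toReal * (-Real.log (q y).toReal)) :=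
              (ENNReal.ofReal_mul ENNReal.toReal_nonneg).symm
    have hsum : ∑ y, p y * negLog (q y)
        = ENNReal.ofReal (∑ y, (p y).toReal * (-Real.log (q y).toReal)) := by
      rw [ENNReal.ofReal_sum_of_nonneg (fun y _ => mul_nonneg ENNReal.toReal_nonneg
        (neg_nonneg.mpr (Real.log_nonpos ENNReal.toReal_nonneg (hqle1 y))))]
      exact Finset.sum_congr rfl fun y _ => hrw y
    rw [hsum]
    apply ENNReal.ofReal_le_ofReal
    have hPsum : (∑ y', p y').toReal = ∑ y', (p y').toReal :=
      ENNReal.toReal_sum (fun y _ => hp y)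
    rw [hPsum]
    apply real_gibbs (fun y => (p y).toReal) (fun y => (q y).toReal)
      (fun y => ENNReal.toReal_nonneg) (fun y => ENNReal.toReal_nonneg)
    · have := q.tsum_coe
      rw [tsum_fintype] at this
      rw [← ENNReal.toReal_sum (fun y _ => q.apply_ne_top y), this]
      norm_num
    · intro y hy
      have hpy : p y ≠ 0 := by
        intro h; rw [h] at hy; simp at hy
      exact ENNReal.toReal_pos (hbad y hpy) (q.apply_ne_top y)

noncomputable def condEntCell {Ω 𝒴 𝒲 : Type*} [MeasurableSpace Ω] (μ : Measure Ω)
    [Fintype 𝒴] (Y : Ω → 𝒴) (W : Ω → 𝒲) (w : 𝒲) : ℝ :=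
  ∑ y : 𝒴,
    -((μ {ω | Y ω = y ∧ W ω = w}).toReal *
      Real.log ((μ {ω | Y ω = y ∧ W ω = w}).toReal / (μ {ω | W ω = w}).toReal))

lemma condEnt_eq_sum_cell {Ω 𝒴 𝒲 : Type*} [MeasurableSpace Ω] (μ : Measure Ω)
    [Fintype 𝒴] [Fintype 𝒲] (Y : Ω → 𝒴) (W : Ω → 𝒲) :
    condEnt μ Y W = ∑ w : 𝒲, condEntCell μ Y W w := rfl

lemma measure_partition {Ω α : Type*} [MeasurableSpace Ω] [Fintype α] (μ : Measure Ω)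
    (T : Ω → α) (s : Set Ω) (h : ∀ a, MeasurableSet (s ∩ {ω | T ω = a})) :
    μ s = ∑ a : α, μ (s ∩ {ω | T ω = a}) := by
  have hs : s = ⋃ a ∈ (Finset.univ : Finset α), s ∩ {ω | T ω = a} := by
    ext ω; simp
  conv_lhs => rw [hs]
  rw [measure_biUnion_finset ?_ (fun a _ => h a)]
  intro a _ b _ hab
  refine Set.disjoint_left.mpr ?_
  rintro ω ⟨_, h1⟩ ⟨_, h2⟩
  exact hab ((h1.symm.trans h2 : (a:α) = b))

lemma meas_fiber_Y {Ω 𝒴 E : Type*} [MeasurableSpace Ω] (μ : Measure Ω)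
    [Fintype 𝒴] (Y : Ω → 𝒴) (W : Ω → E)
    (hm : ∀ y e, MeasurableSet {ω | Y ω = y ∧ W ω = e}) (e : E) :
    μ {ω | W ω = e} = ∑ y : 𝒴, μ {ω | Y ω = y ∧ W ω = e} := by
  have key : ∀ y : 𝒴, {ω | W ω = e} ∩ {ω | Y ω = y} = {ω | Y ω = y ∧ W ω = e} := by
    intro y; ext ω; simp [Set.mem_setOf_eq, and_comm]
  rw [measure_partition μ Y _ (fun y => (key y) ▸ hm y e)]
  exact Finset.sum_congr rfl fun y _ => by rw [key y]

lemma condEntCell_nonneg {Ω 𝒴 E : Type*} [MeasurableSpace Ω] (μ : Measure Ω)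
    [IsFiniteMeasure μ] [Fintype 𝒴] (Y : Ω → 𝒴) (W : Ω → E) (e : E) :
    0 ≤ condEntCell μ Y W e := by
  apply Finset.sum_nonneg
  intro y _
  set p := (μ {ω | Y ω = y ∧ W ω = e}).toReal with hpdef
  set P := (μ {ω | W ω = e}).toReal with hPdef
  have hp0 : 0 ≤ p := ENNReal.toReal_nonneg
  have hpP : p ≤ P := by
    apply ENNReal.toReal_mono (measure_ne_top μ _)
    exact measure_mono (fun ω h => h.2)
  rcases eq_or_lt_of_le hp0 with h0 | hpos
  · simp [← h0]
  · have hPpos : 0 < P := lt_of_lt_of_le hpos hpP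
    have : Real.log (p / P) ≤ 0 :=
      Real.log_nonpos (by positivity) ((div_le_one hPpos).mpr hpP)
    nlinarith

lemma condEnt_nonneg {Ω 𝒴 E : Type*} [MeasurableSpace Ω] (μ : Measure Ω)
    [IsFiniteMeasure μ] [Fintype 𝒴] [Fintype E] (Y : Ω → 𝒴) (W : Ω → E) :
    0 ≤ condEnt μ Y W := by
  rw [condEnt_eq_sum_cell]
  exact Finset.sum_nonneg fun e _ => condEntCell_nonneg μ Y W e

lemma gibbs_cellwise {Ω 𝒴 E : Type*} [MeasurableSpace Ω] (μ : Measure Ω)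
    [IsFiniteMeasure μ] [Fintype 𝒴] (Y : Ω → 𝒴) (W : Ω → E)
    (hm : ∀ y e, MeasurableSet {ω | Y ω = y ∧ W ω = e}) (e : E) (q : PMF 𝒴) :
    ENNReal.ofReal (condEntCell μ Y W e)
      ≤ ∑ y : 𝒴, μ {ω | Y ω = y ∧ W ω = e} * negLog (q y) := by
  unfold condEntCell
  rw [meas_fiber_Y μ Y W hm e]
  exact gibbs_arith (fun y => μ {ω | Y ω = y ∧ W ω = e}) (fun y => measure_ne_top μ _) q

lemma regroup {α β E : Type*} [Fintype α] [Fintype β] [Fintype E] [DecidableEq E]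
    (r : α → E) (m : α → β → ℝ≥0∞) (M : E → β → ℝ≥0∞) (c : E → β → ℝ≥0∞)
    (hM : ∀ e b, M e b = ∑ a : α, if r a = e then m a b else 0) :
    ∑ a : α, ∑ b : β, m a b * c (r a) b = ∑ e : E, ∑ b : β, M e b * c e b := by
  have hR : ∀ e b, M e b * c e b = ∑ a : α, if r a = e then m a b * c e b else 0 := by
    intro e b
    rw [hM e b, Finset.sum_mul]
    exact Finset.sum_congr rfl fun a _ => by rw [ite_mul, zero_mul]
  have hL : ∀ a b, m a b * c (r a) b = ∑ e : E, if r a = e then m a b * c e b else 0 := by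
    intro a b
    rw [Finset.sum_ite_eq Finset.univ (r a) (fun e => m a b * c e b)]
    simp
  simp_rw [hR, hL]
  calc ∑ a : α, ∑ b : β, ∑ e : E, (if r a = e then m a b * c e b else 0)
      = ∑ a : α, ∑ e : E, ∑ b : β, (if r a = e then m a b * c e b else 0) :=
        Finset.sum_congr rfl fun a _ => Finset.sum_comm
    _ = ∑ e : E, ∑ a : α, ∑ b : β, (if r a = e then m a b * c e b else 0) := Finset.sum_comm
    _ = ∑ e : E, ∑ b : β, ∑ a : α, (if r a = e then m a b * c e b else 0) :=
        Finset.sum_congr rfl fun e _ => Finset.sum_comm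

noncomputable def extFun {d : ℕ} (𝒳 : Type*) [Nonempty 𝒳] (Φ : Finset (Fin d))
    (w : { j : Fin d // j ∈ Φ } → 𝒳) : Fin d → 𝒳 :=
  fun j => if h : j ∈ Φ then w ⟨j, h⟩ else Classical.arbitrary 𝒳

lemma meas_XY {Ω 𝒳 𝒴 : Type*} [MeasurableSpace Ω] {d : ℕ}
    [MeasurableSpace 𝒳] [MeasurableSingletonClass 𝒳]
    [MeasurableSpace 𝒴] [MeasurableSingletonClass 𝒴]
    {X : Ω → Fin d → 𝒳} {Y : Ω → 𝒴} (hX : Measurable X) (hY : Measurable Y)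
    (x : Fin d → 𝒳) (y : 𝒴) : MeasurableSet {ω | X ω = x ∧ Y ω = y} := by
  rw [Set.setOf_and]
  exact (hX (measurableSet_singleton x)).inter (hY (measurableSet_singleton y))

lemma meas_mask {Ω 𝒳 : Type*} [MeasurableSpace Ω] {d : ℕ}
    [MeasurableSpace 𝒳] {X : Ω → Fin d → 𝒳} (hX : Measurable X) (Φ : Finset (Fin d)) :
    Measurable (maskFun X Φ) :=
  measurable_pi_lambda _ fun j => (measurable_pi_apply j.1).comp hX

lemma meas_Ymask {Ω 𝒳 𝒴 : Type*} [MeasurableSpace Ω] {d : ℕ}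
    [MeasurableSpace 𝒳] [MeasurableSingletonClass 𝒳]
    [MeasurableSpace 𝒴] [MeasurableSingletonClass 𝒴]
    {X : Ω → Fin d → 𝒳} {Y : Ω → 𝒴} (hX : Measurable X) (hY : Measurable Y)
    (Φ : Finset (Fin d)) (y : 𝒴) (w : { j : Fin d // j ∈ Φ } → 𝒳) :
    MeasurableSet {ω | Y ω = y ∧ maskFun X Φ ω = w} := by
  rw [Set.setOf_and]
  exact (hY (measurableSet_singleton y)).inter ((meas_mask hX Φ) (measurableSet_singleton w))

lemma meas_rhoZ {Ω 𝒵 : Type*} [MeasurableSpace Ω] [MeasurableSpace 𝒵] [Fintype 𝒵]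
    [MeasurableSingletonClass 𝒵] {Z : Ω → 𝒵} (hZ : Measurable Z)
    {K : ℕ} (ρ : 𝒵 → Fin K) (k : Fin K) : MeasurableSet {ω | ρ (Z ω) = k} :=
  hZ ((Set.toFinite {z | ρ z = k}).measurableSet)

section Regroup
set_option linter.unusedSectionVars false

variable {Ω 𝒳 𝒴 𝒵 : Type*} [MeasurableSpace Ω] {d : ℕ}
    [Fintype 𝒳] [Nonempty 𝒳] [Fintype 𝒴]
    [MeasurableSpace 𝒳] [MeasurableSingletonClass 𝒳]
    [MeasurableSpace 𝒴] [MeasurableSingletonClass 𝒴]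
    [MeasurableSpace 𝒵] [Fintype 𝒵] [MeasurableSingletonClass 𝒵]

lemma ext_agree (Φ : Finset (Fin d)) (x : Fin d → 𝒳) (j : Fin d) (hj : j ∈ Φ) :
    x j = extFun 𝒳 Φ (fun i : {i // i ∈ Φ} => x i.1) j := by
  simp [extFun, dif_pos hj]

lemma ceRisk_eq_cells (μ : Measure Ω) {X : Ω → Fin d → 𝒳} {Y : Ω → 𝒴}
    (hX : Measurable X) (hY : Measurable Y) (Φ : Finset (Fin d))
    (f : (Fin d → 𝒳) → PMF 𝒴)
    (hdep : ∀ x x' : Fin d → 𝒳, (∀ j ∈ Φ, x j = x' j) → f x = f x') :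
    ceRisk μ X Y f = ∑ w : {j // j ∈ Φ} → 𝒳, ∑ y : 𝒴,
      μ {ω | Y ω = y ∧ maskFun X Φ ω = w} * negLog (f (extFun 𝒳 Φ w) y) := by
  classical
  have hfx : ∀ x : Fin d → 𝒳, f x = f (extFun 𝒳 Φ (fun i : {i // i ∈ Φ} => x i.1)) :=
    fun x => hdep x _ (fun j hj => ext_agree Φ x j hj)
  have step1 : ceRisk μ X Y f = ∑ x : Fin d → 𝒳, ∑ y : 𝒴,
      μ {ω | X ω = x ∧ Y ω = y} *
        negLog (f (extFun 𝒳 Φ (fun i : {i // i ∈ Φ} => x i.1)) y) := by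
    unfold ceRisk
    exact Finset.sum_congr rfl fun x _ => by rw [← hfx x]
  rw [step1]
  apply regroup (r := fun (x : Fin d → 𝒳) (i : {i // i ∈ Φ}) => x i.1)
    (m := fun x y => μ {ω | X ω = x ∧ Y ω = y})
    (M := fun w y => μ {ω | Y ω = y ∧ maskFun X Φ ω = w})
    (c := fun w y => negLog (f (extFun 𝒳 Φ w) y))
  intro w y
  have hcell : ∀ x : Fin d → 𝒳,
      {ω | Y ω = y ∧ maskFun X Φ ω = w} ∩ {ω | X ω = x}
        = if (fun i : {i // i ∈ Φ} => x i.1) = w then {ω | X ω = x ∧ Y ω = y} else ∅ := by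
    intro x
    by_cases h : (fun i : {i // i ∈ Φ} => x i.1) = w
    · rw [if_pos h]
      ext ω
      simp only [Set.mem_inter_iff, Set.mem_setOf_eq]
      constructor
      · rintro ⟨⟨hy, _⟩, hx⟩; exact ⟨hx, hy⟩
      · rintro ⟨hx, hy⟩
        refine ⟨⟨hy, ?_⟩, hx⟩
        have : maskFun X Φ ω = fun i : {i // i ∈ Φ} => x i.1 := by
          funext i; simp [maskFun, hx]
        rw [this, h]
    · rw [if_neg h]
      ext ω
      simp only [Set.mem_inter_iff, Set.mem_setOf_eq, Set.mem_empty_iff_false, iff_false]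
      rintro ⟨⟨hy, hw⟩, hx⟩
      apply h
      funext i
      rw [← hx]
      exact congrFun hw i
  rw [measure_partition μ X _ (fun x => by
    rw [hcell x]
    split_ifs
    · exact meas_XY hX hY x y
    · exact MeasurableSet.empty)]
  apply Finset.sum_congr rfl
  intro x _
  rw [hcell x, apply_ite μ, measure_empty]


lemma ceRiskW_eq_cells (μ : Measure Ω) {X : Ω → Fin d → 𝒳} {Y : Ω → 𝒴} {Z : Ω → 𝒵}
    (hX : Measurable X) (hY : Measurable Y) (hZ : Measurable Z)
    (Φ : Finset (Fin d)) {K : ℕ} (ρ : 𝒵 → Fin K) (k : Fin K)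
    (f : (Fin d → 𝒳) → PMF 𝒴)
    (hdep : ∀ x x' : Fin d → 𝒳, (∀ j ∈ Φ, x j = x' j) → f x = f x') :
    ceRiskW μ X Y Z ρ k f = ∑ w : {j // j ∈ Φ} → 𝒳, ∑ y : 𝒴,
      μ {ω | Y ω = y ∧ (fun ω' => (ρ (Z ω'), maskFun X Φ ω')) ω = (k, w)} *
        negLog (f (extFun 𝒳 Φ w) y) := by
  classical
  have hfx : ∀ x : Fin d → 𝒳, f x = f (extFun 𝒳 Φ (fun i : {i // i ∈ Φ} => x i.1)) :=
    fun x => hdep x _ (fun j hj => ext_agree Φ x j hj)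
  have step1 : ceRiskW μ X Y Z ρ k f = ∑ x : Fin d → 𝒳, ∑ y : 𝒴,
      μ {ω | ρ (Z ω) = k ∧ X ω = x ∧ Y ω = y} *
        negLog (f (extFun 𝒳 Φ (fun i : {i // i ∈ Φ} => x i.1)) y) := by
    unfold ceRiskW
    exact Finset.sum_congr rfl fun x _ => by rw [← hfx x]
  rw [step1]
  apply regroup (r := fun (x : Fin d → 𝒳) (i : {i // i ∈ Φ}) => x i.1)
    (m := fun x y => μ {ω | ρ (Z ω) = k ∧ X ω = x ∧ Y ω = y})
    (M := fun w y => μ {ω | Y ω = y ∧ (fun ω' => (ρ (Z ω'), maskFun X Φ ω')) ω = (k, w)})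
    (c := fun w y => negLog (f (extFun 𝒳 Φ w) y))
  intro w y
  have hcell : ∀ x : Fin d → 𝒳,
      {ω | Y ω = y ∧ (fun ω' => (ρ (Z ω'), maskFun X Φ ω')) ω = (k, w)} ∩ {ω | X ω = x}
        = if (fun i : {i // i ∈ Φ} => x i.1) = w then
            {ω | ρ (Z ω) = k ∧ X ω = x ∧ Y ω = y} else ∅ := by
    intro x
    by_cases h : (fun i : {i // i ∈ Φ} => x i.1) = w
    · rw [if_pos h]
      ext ω
      simp only [Set.mem_inter_iff, Set.mem_setOf_eq, Prod.mk.injEq]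
      constructor
      · rintro ⟨⟨hy, hk, _⟩, hx⟩; exact ⟨hk, hx, hy⟩
      · rintro ⟨hk, hx, hy⟩
        refine ⟨⟨hy, hk, ?_⟩, hx⟩
        have : maskFun X Φ ω = fun i : {i // i ∈ Φ} => x i.1 := by
          funext i; simp [maskFun, hx]
        rw [this, h]
    · rw [if_neg h]
      ext ω
      simp only [Set.mem_inter_iff, Set.mem_setOf_eq, Prod.mk.injEq,
        Set.mem_empty_iff_false, iff_false]
      rintro ⟨⟨hy, hk, hw⟩, hx⟩
      apply h
      funext i
      rw [← hx]
      exact congrFun hw i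
  have hmz : ∀ x : Fin d → 𝒳, MeasurableSet {ω | ρ (Z ω) = k ∧ X ω = x ∧ Y ω = y} := by
    intro x
    rw [Set.setOf_and, Set.setOf_and]
    exact (meas_rhoZ hZ ρ k).inter ((hX (measurableSet_singleton x)).inter
      (hY (measurableSet_singleton y)))
  rw [measure_partition μ X _ (fun x => by
    rw [hcell x]
    split_ifs
    · exact hmz x
    · exact MeasurableSet.empty)]
  apply Finset.sum_congr rfl
  intro x _
  rw [hcell x, apply_ite μ, measure_empty]

lemma meas_YmaskP (μ : Measure Ω) {X : Ω → Fin d → 𝒳} {Y : Ω → 𝒴} {Z : Ω → 𝒵}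
    (hX : Measurable X) (hY : Measurable Y) (hZ : Measurable Z)
    (Φ : Finset (Fin d)) {K : ℕ} (ρ : 𝒵 → Fin K) (y : 𝒴)
    (e : Fin K × ({j // j ∈ Φ} → 𝒳)) :
    MeasurableSet {ω | Y ω = y ∧ (fun ω' => (ρ (Z ω'), maskFun X Φ ω')) ω = e} := by
  obtain ⟨k, w⟩ := e
  have : {ω | Y ω = y ∧ (fun ω' => (ρ (Z ω'), maskFun X Φ ω')) ω = (k, w)}
      = {ω | Y ω = y} ∩ ({ω | ρ (Z ω) = k} ∩ {ω | maskFun X Φ ω = w}) := by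
    ext ω; simp [Prod.mk.injEq, and_assoc]
  rw [this]
  exact (hY (measurableSet_singleton y)).inter ((meas_rhoZ hZ ρ k).inter
    ((meas_mask hX Φ) (measurableSet_singleton w)))

lemma ceRisk_ge_condEnt (μ : Measure Ω) [IsFiniteMeasure μ]
    {X : Ω → Fin d → 𝒳} {Y : Ω → 𝒴}
    (hX : Measurable X) (hY : Measurable Y) (Φ : Finset (Fin d))
    (f : (Fin d → 𝒳) → PMF 𝒴)
    (hdep : ∀ x x' : Fin d → 𝒳, (∀ j ∈ Φ, x j = x' j) → f x = f x') :
    ENNReal.ofReal (condEnt μ Y (maskFun X Φ)) ≤ ceRisk μ X Y f := by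
  rw [ceRisk_eq_cells μ hX hY Φ f hdep, condEnt_eq_sum_cell,
    ENNReal.ofReal_sum_of_nonneg (fun w _ => condEntCell_nonneg μ Y (maskFun X Φ) w)]
  exact Finset.sum_le_sum fun w _ =>
    gibbs_cellwise μ Y (maskFun X Φ) (meas_Ymask hX hY Φ) w (f (extFun 𝒳 Φ w))

lemma ceRiskW_ge_cellSum (μ : Measure Ω) [IsFiniteMeasure μ]
    {X : Ω → Fin d → 𝒳} {Y : Ω → 𝒴} {Z : Ω → 𝒵}
    (hX : Measurable X) (hY : Measurable Y) (hZ : Measurable Z)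
    (Φ : Finset (Fin d)) {K : ℕ} (ρ : 𝒵 → Fin K) (k : Fin K)
    (f : (Fin d → 𝒳) → PMF 𝒴)
    (hdep : ∀ x x' : Fin d → 𝒳, (∀ j ∈ Φ, x j = x' j) → f x = f x') :
    ENNReal.ofReal (∑ w : {j // j ∈ Φ} → 𝒳,
        condEntCell μ Y (fun ω => (ρ (Z ω), maskFun X Φ ω)) (k, w))
      ≤ ceRiskW μ X Y Z ρ k f := by
  rw [ceRiskW_eq_cells μ hX hY hZ Φ ρ k f hdep,
    ENNReal.ofReal_sum_of_nonneg (fun w _ =>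
      condEntCell_nonneg μ Y (fun ω => (ρ (Z ω), maskFun X Φ ω)) (k, w))]
  exact Finset.sum_le_sum fun w _ =>
    gibbs_cellwise μ Y (fun ω => (ρ (Z ω), maskFun X Φ ω))
      (meas_YmaskP μ hX hY hZ Φ ρ) (k, w) (f (extFun 𝒳 Φ w))

lemma sum_ceRiskW (μ : Measure Ω) {X : Ω → Fin d → 𝒳} {Y : Ω → 𝒴} {Z : Ω → 𝒵}
    (hX : Measurable X) (hY : Measurable Y) (hZ : Measurable Z)
    {K : ℕ} (ρ : 𝒵 → Fin K) (f : (Fin d → 𝒳) → PMF 𝒴) :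
    ∑ k : Fin K, ceRiskW μ X Y Z ρ k f = ceRisk μ X Y f := by
  unfold ceRisk ceRiskW
  rw [Finset.sum_comm]
  apply Finset.sum_congr rfl
  intro x _
  rw [Finset.sum_comm]
  apply Finset.sum_congr rfl
  intro y _
  have hpart : μ {ω | X ω = x ∧ Y ω = y}
      = ∑ k : Fin K, μ {ω | ρ (Z ω) = k ∧ X ω = x ∧ Y ω = y} := by
    have key : ∀ k : Fin K, {ω | X ω = x ∧ Y ω = y} ∩ {ω | ρ (Z ω) = k}
        = {ω | ρ (Z ω) = k ∧ X ω = x ∧ Y ω = y} := by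
      intro k; ext ω; simp only [Set.mem_inter_iff, Set.mem_setOf_eq]; tauto
    rw [measure_partition μ (fun ω => ρ (Z ω)) _ (fun k => by
      rw [key k, Set.setOf_and, Set.setOf_and]
      exact (meas_rhoZ hZ ρ k).inter ((hX (measurableSet_singleton x)).inter
        (hY (measurableSet_singleton y))))]
    exact Finset.sum_congr rfl fun k _ => by rw [key k]
  rw [hpart, Finset.sum_mul]

end Regroup

lemma shEnt_nonneg {Ω 𝒴 : Type*} [MeasurableSpace Ω] (μ : Measure Ω) [IsProbabilityMeasure μ]
    [Fintype 𝒴] (Y : Ω → 𝒴) : 0 ≤ shEnt μ Y := by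
  apply Finset.sum_nonneg
  intro y _
  have h1 : (μ {ω | Y ω = y}).toReal ≤ 1 := by
    have := ENNReal.toReal_mono (by norm_num) (prob_le_one (μ := μ) (s := {ω | Y ω = y}))
    simpa using this
  have h0 : (0:ℝ) ≤ (μ {ω | Y ω = y}).toReal := ENNReal.toReal_nonneg
  nlinarith [Real.log_nonpos h0 h1]

lemma condEnt_subsingleton {Ω 𝒴 𝒲 : Type*} [MeasurableSpace Ω] (μ : Measure Ω)
    [IsProbabilityMeasure μ] [Fintype 𝒴] [Fintype 𝒲] [Subsingleton 𝒲] [h : Nonempty 𝒲]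
    (Y : Ω → 𝒴) (W : Ω → 𝒲) : condEnt μ Y W = shEnt μ Y := by
  obtain ⟨w0⟩ := h
  haveI : Unique 𝒲 := uniqueOfSubsingleton w0
  have hWuniv : ∀ w : 𝒲, {ω : Ω | W ω = w} = Set.univ := by
    intro w; ext ω; simp [Subsingleton.elim (W ω) w]
  have hYW : ∀ (y : 𝒴) (w : 𝒲), {ω | Y ω = y ∧ W ω = w} = {ω | Y ω = y} := by
    intro y w; ext ω; simp [Subsingleton.elim (W ω) w]
  rw [condEnt, Finset.univ_unique, Finset.sum_singleton, shEnt]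
  apply Finset.sum_congr rfl
  intro y _
  rw [hYW y default, hWuniv default, measure_univ]
  norm_num

lemma condEnt_empty_mask {Ω 𝒳 𝒴 : Type*} [MeasurableSpace Ω] (μ : Measure Ω)
    [IsProbabilityMeasure μ] {d : ℕ} [Fintype 𝒳] [Nonempty 𝒳] [Fintype 𝒴]
    (X : Ω → Fin d → 𝒳) (Y : Ω → 𝒴) :
    condEnt μ Y (maskFun X (∅ : Finset (Fin d))) = shEnt μ Y := by
  haveI : IsEmpty {j : Fin d // j ∈ (∅ : Finset (Fin d))} :=
    ⟨fun j => (Finset.notMem_empty j.1 j.2)⟩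
  haveI : Subsingleton ({j : Fin d // j ∈ (∅ : Finset (Fin d))} → 𝒳) :=
    ⟨fun a b => funext fun j => isEmptyElim j⟩
  exact condEnt_subsingleton μ Y (maskFun X ∅)

/-- The ZIN objective `L̂(Φ)`: infimum over classifiers `f ∈ 𝓕 Φ` of the supremum over
environment-partition functions `ρ : 𝒵 → Fin K` of the cross-entropy risk plus `λ` times the
invariance penalty. -/
noncomputable def Lhat {Ω 𝒳 𝒴 𝒵 : Type*} [MeasurableSpace Ω] (μ : Measure Ω)
    [Fintype 𝒳] [Fintype 𝒴] (K : ℕ) {d : ℕ}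
    (X : Ω → Fin d → 𝒳) (Y : Ω → 𝒴) (Z : Ω → 𝒵)
    (𝓕 : Finset (Fin d) → Set ((Fin d → 𝒳) → PMF 𝒴)) (lam : ℝ)
    (Φ : Finset (Fin d)) : ℝ≥0∞ :=
  ⨅ f ∈ 𝓕 Φ, ⨆ ρ : 𝒵 → Fin K,
    ceRisk μ X Y f + ENNReal.ofReal lam *
      ∑ k : Fin K, (ceRiskW μ X Y Z ρ k f - ⨅ g ∈ 𝓕 Φ, ceRiskW μ X Y Z ρ k g)

/-- **Theorem 2 (identifiability of invariant features).** Under Assumptions 1–3 and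
Conditions 1–2, if `ε < δC/4`, `λ > (H[Y] + 2ε)/(δC - 4ε)` and `ε < γ/(2(1 + 2λ))`, then
`L̂(V) < L̂(Φ)` for every feature mask `Φ ≠ V`: the solution of the ZIN objective identifies
exactly the invariant features `V`. -/
theorem zin_identifiability
    {Ω 𝒳 𝒴 𝒵 : Type*} [MeasurableSpace Ω] (μ : Measure Ω) [IsProbabilityMeasure μ]
    [Fintype 𝒳] [Nonempty 𝒳] [Fintype 𝒴] [Nonempty 𝒴] [Fintype 𝒵] [Nonempty 𝒵]
    [MeasurableSpace 𝒳] [MeasurableSingletonClass 𝒳]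
    [MeasurableSpace 𝒴] [MeasurableSingletonClass 𝒴]
    [MeasurableSpace 𝒵] [MeasurableSingletonClass 𝒵]
    {d : ℕ} (X : Ω → Fin d → 𝒳) (Y : Ω → 𝒴) (Z : Ω → 𝒵)
    (hX : Measurable X) (hY : Measurable Y) (hZ : Measurable Z)
    -- the invariant features `V` and the number of inferred environments `K`
    (V : Finset (Fin d)) {K : ℕ} (hK : 1 ≤ K)
    -- the classifier classes `𝓕 Φ`: nonempty sets of classifiers depending only on `X_Φ`
    (𝓕 : Finset (Fin d) → Set ((Fin d → 𝒳) → PMF 𝒴))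
    (h𝓕ne : ∀ Φ, (𝓕 Φ).Nonempty)
    (h𝓕dep : ∀ Φ, ∀ f ∈ 𝓕 Φ, ∀ x x' : Fin d → 𝒳, (∀ j ∈ Φ, x j = x' j) → f x = f x')
    -- constants
    (lam ε δ γ C : ℝ)
    (hlam0 : 0 ≤ lam) (hε0 : 0 ≤ ε) (hδ0 : 0 < δ) (hδ1 : δ ≤ 1) (hγ0 : 0 < γ) (hC0 : 0 < C)
    -- Assumption 1: the function classes are rich enough
    (A1 : ∀ (Φ : Finset (Fin d)) (ρ : 𝒵 → Fin K),
      (∃ f ∈ 𝓕 Φ, ceRisk μ X Y f ≤ ENNReal.ofReal (condEnt μ Y (maskFun X Φ) + ε)) ∧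
      (∃ g : Fin K → ((Fin d → 𝒳) → PMF 𝒴), (∀ k, g k ∈ 𝓕 Φ) ∧
        ∑ k : Fin K, ceRiskW μ X Y Z ρ k (g k) ≤
          ENNReal.ofReal (condEnt μ Y (fun ω => (ρ (Z ω), maskFun X Φ ω)) + ε)))
    -- Assumption 2: adding features does not make the penalty of a spurious feature vanish
    (A2 : ∀ A B : Finset (Fin d), A.Nonempty → A ⊆ Finset.univ \ V → ∀ ρ : 𝒵 → Fin K,
      condEnt μ Y (maskFun X (A ∪ B)) -
          condEnt μ Y (fun ω => (ρ (Z ω), maskFun X (A ∪ B) ω)) ≥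
        δ * (condEnt μ Y (maskFun X A) -
          condEnt μ Y (fun ω => (ρ (Z ω), maskFun X A ω))))
    -- Assumption 3: every feature carries γ of extra information about Y
    (A3 : ∀ A B : Finset (Fin d), B.Nonempty → Disjoint A B →
      condEnt μ Y (maskFun X (A ∪ B)) ≤ condEnt μ Y (maskFun X A) - γ)
    -- Condition 1: invariance preserving
    (C1 : ∀ ρ : 𝒵 → Fin K,
      condEnt μ Y (fun ω => (ρ (Z ω), maskFun X V ω)) = condEnt μ Y (maskFun X V))
    -- Condition 2: non-invariance distinguishing
    (C2 : ∀ j : Fin d, j ∉ V → ∃ ρ : 𝒵 → Fin K,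
      condEnt μ Y (maskFun X {j}) -
        condEnt μ Y (fun ω => (ρ (Z ω), maskFun X {j} ω)) ≥ C)
    -- constraints on the constants
    (h1 : ε < δ * C / 4)
    (h2 : lam > (shEnt μ Y + 2 * ε) / (δ * C - 4 * ε))
    (h3 : ε < γ / (2 * (1 + 2 * lam))) :
    ∀ Φ : Finset (Fin d), Φ ≠ V →
      Lhat μ K X Y Z 𝓕 lam V < Lhat μ K X Y Z 𝓕 lam Φ := by
  classical
  intro Φ hΦV
  set ρ0 : 𝒵 → Fin K := fun _ => ⟨0, hK⟩ with hρ0def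
  have hHv0 : 0 ≤ condEnt μ Y (maskFun X V) := condEnt_nonneg μ Y _
  have hHY0 : 0 ≤ shEnt μ Y := shEnt_nonneg μ Y
  have hHvHY : condEnt μ Y (maskFun X V) ≤ shEnt μ Y := by
    rcases V.eq_empty_or_nonempty with hV | hV
    · rw [hV, condEnt_empty_mask μ X Y]
    · have h3' := A3 ∅ V hV (Finset.disjoint_empty_left V)
      rw [Finset.empty_union, condEnt_empty_mask μ X Y] at h3'
      linarith
  -- upper bound on Lhat V
  obtain ⟨f, hfmem, hfR⟩ := (A1 V ρ0).1
  have hub : Lhat μ K X Y Z 𝓕 lam V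
      ≤ ENNReal.ofReal (condEnt μ Y (maskFun X V) + (ε + lam * ε)) := by
    have hstep : Lhat μ K X Y Z 𝓕 lam V ≤ ⨆ ρ : 𝒵 → Fin K,
        (ceRisk μ X Y f + ENNReal.ofReal lam *
          ∑ k : Fin K, (ceRiskW μ X Y Z ρ k f - ⨅ g ∈ 𝓕 V, ceRiskW μ X Y Z ρ k g)) :=
      iInf₂_le f hfmem
    refine hstep.trans (iSup_le fun ρ => ?_)
    have hdepf := h𝓕dep V f hfmem
    have hHk_le_f : ∀ k : Fin K,
        ENNReal.ofReal (∑ w, condEntCell μ Y (fun ω => (ρ (Z ω), maskFun X V ω)) (k, w))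
          ≤ ceRiskW μ X Y Z ρ k f :=
      fun k => ceRiskW_ge_cellSum μ hX hY hZ V ρ k f hdepf
    have hHk_le_inf : ∀ k : Fin K,
        ENNReal.ofReal (∑ w, condEntCell μ Y (fun ω => (ρ (Z ω), maskFun X V ω)) (k, w))
          ≤ ⨅ g ∈ 𝓕 V, ceRiskW μ X Y Z ρ k g :=
      fun k => le_iInf₂ fun g hg => ceRiskW_ge_cellSum μ hX hY hZ V ρ k g (h𝓕dep V g hg)
    have hsumHk : ∑ k : Fin K,
        ENNReal.ofReal (∑ w, condEntCell μ Y (fun ω => (ρ (Z ω), maskFun X V ω)) (k, w))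
          = ENNReal.ofReal (condEnt μ Y (maskFun X V)) := by
      rw [← ENNReal.ofReal_sum_of_nonneg (fun k _ => Finset.sum_nonneg fun w _ =>
        condEntCell_nonneg μ Y (fun ω => (ρ (Z ω), maskFun X V ω)) (k, w)), ← C1 ρ]
      congr 1
      rw [condEnt_eq_sum_cell, Fintype.sum_prod_type]
    have hpen : ∑ k : Fin K, (ceRiskW μ X Y Z ρ k f - ⨅ g ∈ 𝓕 V, ceRiskW μ X Y Z ρ k g)
        ≤ ENNReal.ofReal ε := by
      have step1 : ∑ k : Fin K, (ceRiskW μ X Y Z ρ k f - ⨅ g ∈ 𝓕 V, ceRiskW μ X Y Z ρ k g)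
          ≤ ∑ k : Fin K, (ceRiskW μ X Y Z ρ k f -
            ENNReal.ofReal (∑ w, condEntCell μ Y (fun ω => (ρ (Z ω), maskFun X V ω)) (k, w))) :=
        Finset.sum_le_sum fun k _ => tsub_le_tsub_left (hHk_le_inf k) _
      have step2 : ∑ k : Fin K, (ceRiskW μ X Y Z ρ k f -
            ENNReal.ofReal (∑ w, condEntCell μ Y (fun ω => (ρ (Z ω), maskFun X V ω)) (k, w)))
          + ∑ k : Fin K,
            ENNReal.ofReal (∑ w, condEntCell μ Y (fun ω => (ρ (Z ω), maskFun X V ω)) (k, w))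
          = ∑ k : Fin K, ceRiskW μ X Y Z ρ k f := by
        rw [← Finset.sum_add_distrib]
        exact Finset.sum_congr rfl fun k _ => tsub_add_cancel_of_le (hHk_le_f k)
      have step3 : ∑ k : Fin K, (ceRiskW μ X Y Z ρ k f -
            ENNReal.ofReal (∑ w, condEntCell μ Y (fun ω => (ρ (Z ω), maskFun X V ω)) (k, w)))
          = ∑ k : Fin K, ceRiskW μ X Y Z ρ k f
            - ENNReal.ofReal (condEnt μ Y (maskFun X V)) := by
        rw [← hsumHk]
        exact ENNReal.eq_sub_of_add_eq (by
          rw [hsumHk]; exact ENNReal.ofReal_ne_top) step2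
      calc ∑ k : Fin K, (ceRiskW μ X Y Z ρ k f - ⨅ g ∈ 𝓕 V, ceRiskW μ X Y Z ρ k g)
          ≤ ∑ k : Fin K, ceRiskW μ X Y Z ρ k f
            - ENNReal.ofReal (condEnt μ Y (maskFun X V)) := step1.trans (le_of_eq step3)
        _ = ceRisk μ X Y f - ENNReal.ofReal (condEnt μ Y (maskFun X V)) := by
            rw [sum_ceRiskW μ hX hY hZ ρ f]
        _ ≤ ENNReal.ofReal (condEnt μ Y (maskFun X V) + ε)
            - ENNReal.ofReal (condEnt μ Y (maskFun X V)) := tsub_le_tsub_right hfR _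
        _ = ENNReal.ofReal ε := by
            rw [← ENNReal.ofReal_sub _ hHv0]
            ring_nf
    calc ceRisk μ X Y f + ENNReal.ofReal lam *
          ∑ k : Fin K, (ceRiskW μ X Y Z ρ k f - ⨅ g ∈ 𝓕 V, ceRiskW μ X Y Z ρ k g)
        ≤ ENNReal.ofReal (condEnt μ Y (maskFun X V) + ε)
          + ENNReal.ofReal lam * ENNReal.ofReal ε :=
          add_le_add hfR (by gcongr)
      _ = ENNReal.ofReal (condEnt μ Y (maskFun X V) + (ε + lam * ε)) := by
          rw [← ENNReal.ofReal_mul hlam0,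
            ← ENNReal.ofReal_add (by linarith) (mul_nonneg hlam0 hε0)]
          ring_nf
  have hsumsub : ∀ (a b : Fin K → ℝ≥0∞),
      (∑ k : Fin K, a k) - (∑ k : Fin K, b k) ≤ ∑ k : Fin K, (a k - b k) := by
    intro a b
    rw [tsub_le_iff_right]
    calc ∑ k : Fin K, a k ≤ ∑ k : Fin K, ((a k - b k) + b k) :=
          Finset.sum_le_sum fun k _ => le_tsub_add
      _ = ∑ k : Fin K, (a k - b k) + ∑ k : Fin K, b k := Finset.sum_add_distrib
  by_cases hsub : Φ ⊆ V
  · -- Φ ⊊ V : missing invariant feature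
    have hne : (V \ Φ).Nonempty :=
      Finset.sdiff_nonempty.mpr (fun h => hΦV (Finset.Subset.antisymm hsub h))
    have hA3 := A3 Φ (V \ Φ) hne Finset.disjoint_sdiff
    rw [Finset.union_sdiff_of_subset hsub] at hA3
    have hlb : ENNReal.ofReal (condEnt μ Y (maskFun X Φ)) ≤ Lhat μ K X Y Z 𝓕 lam Φ := by
      refine le_iInf₂ fun f' hf' => ?_
      refine le_trans ?_ (le_iSup _ ρ0)
      exact le_trans (ceRisk_ge_condEnt μ hX hY Φ f' (h𝓕dep Φ f' hf')) le_self_add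
    refine lt_of_le_of_lt hub (lt_of_lt_of_le ?_ hlb)
    have hεγ : ε * (2 * (1 + 2 * lam)) < γ := (lt_div_iff₀ (by positivity)).mp h3
    rw [ENNReal.ofReal_lt_ofReal_iff (by nlinarith)]
    nlinarith [mul_nonneg hlam0 hε0]
  · -- Φ contains a spurious feature j
    obtain ⟨j, hjΦ, hjV⟩ := Finset.not_subset.mp hsub
    obtain ⟨ρ, hρC⟩ := C2 j hjV
    have hA2 := A2 {j} Φ (Finset.singleton_nonempty j)
      (by simp [Finset.subset_iff, hjV]) ρ
    rw [show ({j} ∪ Φ : Finset (Fin d)) = Φ from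
      Finset.union_eq_right.mpr (Finset.singleton_subset_iff.mpr hjΦ)] at hA2
    have hgap : δ * C ≤ condEnt μ Y (maskFun X Φ)
        - condEnt μ Y (fun ω => (ρ (Z ω), maskFun X Φ ω)) :=
      le_trans (mul_le_mul_of_nonneg_left hρC (le_of_lt hδ0)) hA2
    have hHΦρ0 : 0 ≤ condEnt μ Y (fun ω => (ρ (Z ω), maskFun X Φ ω)) := condEnt_nonneg μ Y _
    have hHΦ0 : 0 ≤ condEnt μ Y (maskFun X Φ) := condEnt_nonneg μ Y _
    have hd4 : 0 < δ * C - 4 * ε := by linarith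
    have hδCε : 0 ≤ δ * C - ε := by linarith
    have hh2' : shEnt μ Y + 2 * ε < lam * (δ * C - 4 * ε) := (div_lt_iff₀ hd4).mp h2
    obtain ⟨g, hgmem, hgR⟩ := (A1 Φ ρ).2
    have hlb : ENNReal.ofReal (condEnt μ Y (maskFun X Φ) + lam * (δ * C - ε))
        ≤ Lhat μ K X Y Z 𝓕 lam Φ := by
      refine le_iInf₂ fun f' hf' => ?_
      refine le_trans ?_ (le_iSup _ ρ)
      have hdep' := h𝓕dep Φ f' hf'
      have hRf : ENNReal.ofReal (condEnt μ Y (maskFun X Φ)) ≤ ceRisk μ X Y f' :=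
        ceRisk_ge_condEnt μ hX hY Φ f' hdep'
      have hinf_le : ∑ k : Fin K, (⨅ g' ∈ 𝓕 Φ, ceRiskW μ X Y Z ρ k g')
          ≤ ENNReal.ofReal (condEnt μ Y (fun ω => (ρ (Z ω), maskFun X Φ ω)) + ε) :=
        le_trans (Finset.sum_le_sum fun k _ => iInf₂_le (g k) (hgmem k)) hgR
      have hpen : ENNReal.ofReal (δ * C - ε)
          ≤ ∑ k : Fin K, (ceRiskW μ X Y Z ρ k f' - ⨅ g' ∈ 𝓕 Φ, ceRiskW μ X Y Z ρ k g') := by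
        calc ENNReal.ofReal (δ * C - ε)
            ≤ ENNReal.ofReal (condEnt μ Y (maskFun X Φ)
              - (condEnt μ Y (fun ω => (ρ (Z ω), maskFun X Φ ω)) + ε)) :=
              ENNReal.ofReal_le_ofReal (by linarith)
          _ = ENNReal.ofReal (condEnt μ Y (maskFun X Φ))
              - ENNReal.ofReal (condEnt μ Y (fun ω => (ρ (Z ω), maskFun X Φ ω)) + ε) :=
              ENNReal.ofReal_sub _ (by linarith)
          _ ≤ ceRisk μ X Y f'
              - ENNReal.ofReal (condEnt μ Y (fun ω => (ρ (Z ω), maskFun X Φ ω)) + ε) :=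
              tsub_le_tsub_right hRf _
          _ ≤ ceRisk μ X Y f' - ∑ k : Fin K, (⨅ g' ∈ 𝓕 Φ, ceRiskW μ X Y Z ρ k g') :=
              tsub_le_tsub_left hinf_le _
          _ = (∑ k : Fin K, ceRiskW μ X Y Z ρ k f')
              - ∑ k : Fin K, (⨅ g' ∈ 𝓕 Φ, ceRiskW μ X Y Z ρ k g') := by
              rw [sum_ceRiskW μ hX hY hZ ρ f']
          _ ≤ ∑ k : Fin K, (ceRiskW μ X Y Z ρ k f' - ⨅ g' ∈ 𝓕 Φ, ceRiskW μ X Y Z ρ k g') :=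
              hsumsub _ _
      calc ENNReal.ofReal (condEnt μ Y (maskFun X Φ) + lam * (δ * C - ε))
          = ENNReal.ofReal (condEnt μ Y (maskFun X Φ))
            + ENNReal.ofReal lam * ENNReal.ofReal (δ * C - ε) := by
            rw [← ENNReal.ofReal_mul hlam0, ENNReal.ofReal_add hHΦ0 (mul_nonneg hlam0 hδCε)]
        _ ≤ ceRisk μ X Y f' + ENNReal.ofReal lam *
            ∑ k : Fin K, (ceRiskW μ X Y Z ρ k f' - ⨅ g' ∈ 𝓕 Φ, ceRiskW μ X Y Z ρ k g') :=
            add_le_add hRf (by gcongr)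
    refine lt_of_le_of_lt hub (lt_of_lt_of_le ?_ hlb)
    have hlampos : 0 < lam :=
      lt_of_le_of_lt (div_nonneg (by linarith) (le_of_lt hd4)) h2
    rw [ENNReal.ofReal_lt_ofReal_iff (by nlinarith)]
    nlinarith [mul_nonneg hlam0 hε0]
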